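/- arXiv:2108.13372 — 4 statements merged into one kernel-verified Lean document; each statement's English description precedes it below -/
import Mathlib

section
/- With Λ(t) as in the polarization-loss semigroup (entries damped by e^{-γ_H t}, e^{-γ_V t}, e^{-(γ_H+γ_V)t/2}), let ρ₁ = |H⟩⟨H| and ρ₂ = ½(|H⟩+|V⟩)(⟨H|+⟨V|). Then the trace distance between the normalized conditional states satisfies ½‖Λ(t)[ρ₁]/tr Λ(t)[ρ₁] − Λ(t)[ρ₂]/tr Λ(t)[ρ₂]‖₁ = (1 + e^{(γ_V−γ_H)t})^{−1/2}. -/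
open Matrix
open scoped ComplexOrder

/-- The trace norm `‖A‖₁ = tr √(AᴴA)` of a complex square matrix. -/
noncomputable def traceNorm {n : Type*} [Fintype n] [DecidableEq n]
    (A : Matrix n n ℂ) : ℝ :=
  (((Matrix.posSemidef_conjTranspose_mul_self A).isHermitian.eigenvectorUnitary.1 *
      diagonal (((↑) : ℝ → ℂ) ∘ (√·) ∘ (Matrix.posSemidef_conjTranspose_mul_self A).isHermitian.eigenvalues) *
      (star (Matrix.posSemidef_conjTranspose_mul_self A).isHermitian.eigenvectorUnitary :
        Matrix n n ℂ)).trace).re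

/-- The polarization-loss dynamics: entries damped by
`e^{-γ_H t}, e^{-(γ_H+γ_V)t/2}, e^{-γ_V t}`. -/
noncomputable def lossMap (γH γV t : ℝ) (ρ : Matrix (Fin 2) (Fin 2) ℂ) :
    Matrix (Fin 2) (Fin 2) ℂ :=
  !![(Real.exp (-(γH * t)) : ℂ) * ρ 0 0,
     (Real.exp (-((γH + γV) * t / 2)) : ℂ) * ρ 0 1;
     (Real.exp (-((γH + γV) * t / 2)) : ℂ) * ρ 1 0,
     (Real.exp (-(γV * t)) : ℂ) * ρ 1 1]

set_option maxHeartbeats 2000000 in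
/-- For `ρ₁ = |H⟩⟨H|`, `ρ₂ = ½(|H⟩+|V⟩)(⟨H|+⟨V|)`, the trace distance between the
normalized conditional states equals `(1 + e^{(γ_V-γ_H)t})^{-1/2}`. -/
theorem stmt1 (γH γV : ℝ) (hH : 0 ≤ γH) (hV : 0 ≤ γV) (t : ℝ) (ht : 0 ≤ t)
    (ρ₁ ρ₂ : Matrix (Fin 2) (Fin 2) ℂ)
    (hρ₁ : ρ₁ = !![1, 0; 0, 0])
    (hρ₂ : ρ₂ = (1/2 : ℂ) • !![1, 1; 1, 1]) :
    (1/2 : ℝ) * traceNorm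
        ((lossMap γH γV t ρ₁).trace⁻¹ • lossMap γH γV t ρ₁
          - (lossMap γH γV t ρ₂).trace⁻¹ • lossMap γH γV t ρ₂)
      = (1 + Real.exp ((γV - γH) * t)) ^ (-(1/2) : ℝ) := by
  subst hρ₁ hρ₂
  set a : ℝ := Real.exp (-(γH * t)) with ha
  set b : ℝ := Real.exp (-(γV * t)) with hb
  set c : ℝ := Real.exp (-((γH + γV) * t / 2)) with hc
  have ha0 : 0 < a := Real.exp_pos _
  have hb0 : 0 < b := Real.exp_pos _
  have hs0 : 0 < a + b := by linarith
  have hsC : ((a : ℂ) + b) ≠ 0 := by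
    exact_mod_cast (Complex.ofReal_ne_zero.mpr hs0.ne')
  have haC : (a : ℂ) ≠ 0 := Complex.ofReal_ne_zero.mpr ha0.ne'
  have hc2 : c * c = a * b := by
    rw [ha, hb, hc, ← Real.exp_add, ← Real.exp_add]; ring_nf
  clear_value a b c
  set A := ((lossMap γH γV t !![1, 0; 0, 0]).trace⁻¹ • lossMap γH γV t !![1, 0; 0, 0]
          - (lossMap γH γV t ((1/2 : ℂ) • !![1, 1; 1, 1])).trace⁻¹ •
              lossMap γH γV t ((1/2 : ℂ) • !![1, 1; 1, 1])) with hA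
  have hAeq : A = (((a : ℂ) + b)⁻¹) • !![(b : ℂ), -c; -c, -b] := by
    rw [hA]
    have h1 : (lossMap γH γV t !![1, 0; 0, 0]).trace = (a : ℂ) := by
      simp [lossMap, Matrix.trace_fin_two, ← ha]
    have h2 : (lossMap γH γV t ((1/2 : ℂ) • !![1, 1; 1, 1])).trace
        = ((a : ℂ) + b) / 2 := by
      simp [lossMap, Matrix.trace_fin_two, ← ha, ← hb]; ring
    rw [h1, h2]
    ext i j
    fin_cases i <;> fin_cases j <;>
      simp [lossMap, ← ha, ← hb, ← hc] <;>
      field_simp <;> ring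
  clear_value A
  clear hA
  have hAH : Aᴴ = A := by
    rw [hAeq]
    ext i j
    fin_cases i <;> fin_cases j <;>
      simp [Matrix.conjTranspose_apply, star_mul', Complex.conj_ofReal, ← Complex.ofReal_add]
  have hAHA : Aᴴ * A = (((b / (a + b) : ℝ) : ℂ)) • (1 : Matrix (Fin 2) (Fin 2) ℂ) := by
    rw [hAH, hAeq]
    ext i j
    fin_cases i <;> fin_cases j <;>
      · simp [Matrix.mul_apply, Fin.sum_univ_two, Matrix.one_apply]
        field_simp
        norm_cast
        nlinarith [hc2, mul_eq_zero_of_right (b * c) (show ((Int.negSucc 0 + 1 : ℤ) : ℝ) = 0 by norm_num)]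
  set r : ℝ := Real.sqrt (b / (a + b)) with hr
  have hrnn : 0 ≤ r := Real.sqrt_nonneg _
  set B : Matrix (Fin 2) (Fin 2) ℂ := (r : ℂ) • 1 with hB
  have hBpsd : B.PosSemidef := by
    rw [hB, Matrix.smul_one_eq_diagonal]
    exact Matrix.PosSemidef.diagonal (fun i => by
      simpa using (Complex.zero_le_real.mpr hrnn))
  have hBsq : B ^ 2 = Aᴴ * A := by
    rw [hAHA, hB, smul_pow, one_pow, ← Complex.ofReal_pow, sq,
      Real.mul_self_sqrt (by positivity)]
  have hsqrt : B = (Matrix.posSemidef_conjTranspose_mul_self A).isHermitian.eigenvectorUnitary.1 *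
      diagonal (((↑) : ℝ → ℂ) ∘ (√·) ∘ (Matrix.posSemidef_conjTranspose_mul_self A).isHermitian.eigenvalues) *
      (star (Matrix.posSemidef_conjTranspose_mul_self A).isHermitian.eigenvectorUnitary :
        Matrix (Fin 2) (Fin 2) ℂ) := by
    have e1 := (Matrix.posSemidef_conjTranspose_mul_self A).isHermitian.cfc_eq Real.sqrt
    rw [Matrix.IsHermitian.cfc, Unitary.conjStarAlgAut_apply] at e1
    refine Eq.trans ?_ e1
    open scoped MatrixOrder in
    rw [← cfcₙ_eq_cfc (hf0 := Real.sqrt_zero), ← CFC.sqrt_eq_real_sqrt (Aᴴ * A) (Matrix.posSemidef_conjTranspose_mul_self A).nonneg,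
      ← hBsq, CFC.sqrt_sq B hBpsd.nonneg]
  have htn : traceNorm A = 2 * r := by
    rw [traceNorm, ← hsqrt, hB]
    simp [Matrix.trace_fin_two, Matrix.one_apply]
    ring
  rw [htn]
  have hE : (1 : ℝ) + Real.exp ((γV - γH) * t) = (a + b) / b := by
    have : Real.exp ((γV - γH) * t) = a / b := by
      rw [ha, hb, ← Real.exp_sub]; ring_nf
    rw [this]; field_simp; ring
  have hpow : ((a + b) / b : ℝ) ^ (-(1/2) : ℝ) = (b / (a + b)) ^ ((1/2) : ℝ) := by
    rw [Real.rpow_neg (by positivity), ← Real.inv_rpow (by positivity), inv_div]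
  rw [hE, hpow, ← Real.sqrt_eq_rpow, ← hr]
  ring
end

section
/- If γ_H > γ_V ≥ 0, the function t ↦ √(1 − 8e^{−2γ_H t}/(3e^{−γ_H t} + e^{−γ_V t})²) is strictly monotonically increasing on [0,∞). -/
/-- If `γ_H > γ_V ≥ 0`, the function
`t ↦ √(1 − 8e^{−2γ_H t}/(3e^{−γ_H t} + e^{−γ_V t})²)` is strictly monotonically
increasing on `[0,∞)`. -/
theorem stmt4 (γH γV : ℝ) (h : γH > γV) (hV : 0 ≤ γV) :
    StrictMonoOn (fun t : ℝ =>
        Real.sqrt (1 - 8 * Real.exp (-(2 * γH * t)) /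
          (3 * Real.exp (-(γH * t)) + Real.exp (-(γV * t))) ^ 2))
      (Set.Ici (0 : ℝ)) := by
  have key : ∀ t : ℝ, 8 * Real.exp (-(2 * γH * t)) /
      (3 * Real.exp (-(γH * t)) + Real.exp (-(γV * t))) ^ 2
      = 8 / (3 + Real.exp ((γH - γV) * t)) ^ 2 := by
    intro t
    have hfac : 3 * Real.exp (-(γH * t)) + Real.exp (-(γV * t))
        = Real.exp (-(γH * t)) * (3 + Real.exp ((γH - γV) * t)) := by
      rw [mul_add, ← Real.exp_add]
      ring_nf
    rw [hfac, mul_pow, ← Real.exp_nat_mul]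
    have h2 : ((2 : ℕ) : ℝ) * -(γH * t) = -(2 * γH * t) := by push_cast; ring
    rw [h2]
    field_simp
  intro a ha b hb hab
  simp only [key]
  have hc : 0 < γH - γV := sub_pos.mpr h
  have hea : 1 ≤ Real.exp ((γH - γV) * a) := by
    rw [← Real.exp_zero]
    exact Real.exp_le_exp.mpr (mul_nonneg hc.le ha)
  have heab : Real.exp ((γH - γV) * a) < Real.exp ((γH - γV) * b) := by
    exact Real.exp_lt_exp.mpr (by nlinarith)
  have h4a : (4 : ℝ) ≤ 3 + Real.exp ((γH - γV) * a) := by linarith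
  have hsq : (3 + Real.exp ((γH - γV) * a)) ^ 2 < (3 + Real.exp ((γH - γV) * b)) ^ 2 := by
    nlinarith
  have hpa : (0:ℝ) < (3 + Real.exp ((γH - γV) * a)) ^ 2 := by nlinarith
  have hinner : 8 / (3 + Real.exp ((γH - γV) * b)) ^ 2
      < 8 / (3 + Real.exp ((γH - γV) * a)) ^ 2 :=
    div_lt_div_of_pos_left (by norm_num) hpa hsq
  have hnn : 0 ≤ 1 - 8 / (3 + Real.exp ((γH - γV) * a)) ^ 2 := by
    have : 8 / (3 + Real.exp ((γH - γV) * a)) ^ 2 ≤ 8 / 16 := by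
      apply div_le_div_of_nonneg_left (by norm_num) (by norm_num)
      nlinarith
    linarith
  exact Real.sqrt_lt_sqrt hnn (by linarith)
end

section
/- Define γ_H(t) = γ(1 − ω cos(ωt)/(√(γ²+ω²) + γ sin(ωt))) and γ_V(t) = γ(1 + ω cos(ωt)/(√(γ²+ω²) − γ sin(ωt))) with γ > 0, ω > 0. Then γ_H(t) ≥ 0 and γ_V(t) ≥ 0 for all t ≥ 0. -/
/-- With `γ_H(t) = γ(1 − ω cos(ωt)/(√(γ²+ω²) + γ sin(ωt)))` and
`γ_V(t) = γ(1 + ω cos(ωt)/(√(γ²+ω²) − γ sin(ωt)))`, `γ, ω > 0`, both rates are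
nonnegative for all `t ≥ 0`. -/
theorem stmt7 (γ ω : ℝ) (hγ : 0 < γ) (hω : 0 < ω) (t : ℝ) (ht : 0 ≤ t) :
    0 ≤ γ * (1 - ω * Real.cos (ω * t) /
        (Real.sqrt (γ ^ 2 + ω ^ 2) + γ * Real.sin (ω * t))) ∧
    0 ≤ γ * (1 + ω * Real.cos (ω * t) /
        (Real.sqrt (γ ^ 2 + ω ^ 2) - γ * Real.sin (ω * t))) := by
  have hpy := Real.sin_sq_add_cos_sq (ω * t)
  have hs : Real.sqrt (γ ^ 2 + ω ^ 2) ^ 2 = γ ^ 2 + ω ^ 2 :=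
    Real.sq_sqrt (by positivity)
  have hs0 : 0 < Real.sqrt (γ ^ 2 + ω ^ 2) := Real.sqrt_pos.2 (by positivity)
  have hsin1 : Real.sin (ω * t) ≤ 1 := Real.sin_le_one _
  have hsin2 : -1 ≤ Real.sin (ω * t) := Real.neg_one_le_sin _
  have hγs : γ < Real.sqrt (γ ^ 2 + ω ^ 2) := by nlinarith
  have hd1 : 0 < Real.sqrt (γ ^ 2 + ω ^ 2) + γ * Real.sin (ω * t) := by nlinarith
  have hd2 : 0 < Real.sqrt (γ ^ 2 + ω ^ 2) - γ * Real.sin (ω * t) := by nlinarith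
  constructor
  · apply mul_nonneg hγ.le
    rw [sub_nonneg, div_le_one hd1]
    nlinarith [sq_nonneg (γ * Real.cos (ω * t) + ω * Real.sin (ω * t)), hs0, hpy, hs]
  · apply mul_nonneg hγ.le
    have h : -1 ≤ ω * Real.cos (ω * t) /
        (Real.sqrt (γ ^ 2 + ω ^ 2) - γ * Real.sin (ω * t)) := by
      rw [le_div_iff₀ hd2]
      nlinarith [sq_nonneg (γ * Real.cos (ω * t) + ω * Real.sin (ω * t)), hs0, hpy, hs]
    linarith
end

section
/- The functions p_H(t) = e^{−γt}(1 + (γ/√(γ²+ω²)) sin(ωt)) and p_V(t) = e^{−γt}(1 − (γ/√(γ²+ω²)) sin(ωt)) are nonincreasing on [0,∞) for all γ, ω > 0. -/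
lemma aux9 (γ ω ε : ℝ) (hγ : 0 < γ) (hω : 0 < ω) (hε : ε ^ 2 = 1) :
    AntitoneOn (fun t : ℝ => Real.exp (-(γ * t)) *
        (1 + ε * (γ / Real.sqrt (γ ^ 2 + ω ^ 2)) * Real.sin (ω * t))) Set.univ := by
  set r := Real.sqrt (γ ^ 2 + ω ^ 2) with hrdef
  have hr : 0 < r := Real.sqrt_pos.mpr (by positivity)
  have hr2 : r ^ 2 = γ ^ 2 + ω ^ 2 := Real.sq_sqrt (by positivity)
  set k := ε * (γ / r) with hk
  have hderiv : ∀ x : ℝ, HasDerivAt (fun t : ℝ => Real.exp (-(γ * t)) *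
      (1 + k * Real.sin (ω * t)))
      (Real.exp (-(γ * x)) * (-γ) * (1 + k * Real.sin (ω * x)) +
        Real.exp (-(γ * x)) * (k * (Real.cos (ω * x) * ω))) x := by
    intro x
    have h0 : HasDerivAt (fun t : ℝ => -(γ * t)) (-γ) x := by
      exact (((hasDerivAt_id' x).const_mul γ).neg).congr_deriv (by ring)
    have h1 : HasDerivAt (fun t : ℝ => Real.exp (-(γ * t)))
        (Real.exp (-(γ * x)) * (-γ)) x := (Real.hasDerivAt_exp _).comp x h0
    have h2' : HasDerivAt (fun t : ℝ => Real.sin (ω * t)) (Real.cos (ω * x) * ω) x := by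
      exact ((Real.hasDerivAt_sin (ω * x)).comp x ((hasDerivAt_id' x).const_mul ω)).congr_deriv (by ring)
    have h2 : HasDerivAt (fun t : ℝ => 1 + k * Real.sin (ω * t))
        (k * (Real.cos (ω * x) * ω)) x := (h2'.const_mul k).const_add 1
    exact h1.mul h2
  apply antitoneOn_of_deriv_nonpos convex_univ
  · exact (Continuous.continuousOn (by fun_prop))
  · intro x _
    exact (hderiv x).differentiableAt.differentiableWithinAt
  · intro x _
    rw [(hderiv x).deriv]
    have he : 0 < Real.exp (-(γ * x)) := Real.exp_pos _
    set s := Real.sin (ω * x)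
    set c := Real.cos (ω * x)
    have hsc : s ^ 2 + c ^ 2 = 1 := Real.sin_sq_add_cos_sq _
    -- suffices: -γ * (1 + k*s) + k * (c*ω) ≤ 0
    have hx2 : (ε * (ω * c - γ * s)) ^ 2 = (ω * c - γ * s) ^ 2 := by
      rw [mul_pow, hε, one_mul]
    have key : ε * (ω * c - γ * s) ≤ r := by
      nlinarith [hx2, sq_nonneg (ε * (ω * c - γ * s) - r), sq_nonneg (γ * c + ω * s)]
    have h3 : (-γ * (1 + k * s) + k * (c * ω)) * r = γ * (ε * (ω * c - γ * s) - r) := by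
      rw [hk]
      field_simp
      ring
    have h4 : γ * (ε * (ω * c - γ * s) - r) ≤ 0 :=
      mul_nonpos_of_nonneg_of_nonpos hγ.le (by linarith)
    have h5 : -γ * (1 + k * s) + k * (c * ω) ≤ 0 := by
      have : (-γ * (1 + k * s) + k * (c * ω)) * r ≤ 0 * r := by
        rw [zero_mul]; linarith
      exact le_of_mul_le_mul_right this hr
    have hfin : Real.exp (-(γ * x)) * (-γ * (1 + k * s) + k * (c * ω)) ≤ 0 :=
      mul_nonpos_of_nonneg_of_nonpos he.le h5
    nlinarith [hfin]

/-- The success probabilities `p_H(t) = e^{−γt}(1 + (γ/√(γ²+ω²)) sin(ωt))` and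
`p_V(t) = e^{−γt}(1 − (γ/√(γ²+ω²)) sin(ωt))` are nonincreasing on `[0,∞)` for all
`γ, ω > 0`. -/
theorem stmt9 (γ ω : ℝ) (hγ : 0 < γ) (hω : 0 < ω) :
    AntitoneOn (fun t : ℝ => Real.exp (-(γ * t)) *
        (1 + γ / Real.sqrt (γ ^ 2 + ω ^ 2) * Real.sin (ω * t))) (Set.Ici (0 : ℝ)) ∧
    AntitoneOn (fun t : ℝ => Real.exp (-(γ * t)) *
        (1 - γ / Real.sqrt (γ ^ 2 + ω ^ 2) * Real.sin (ω * t))) (Set.Ici (0 : ℝ)) := by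
  constructor
  · have h := (aux9 γ ω 1 hγ hω (by norm_num)).mono (Set.subset_univ (Set.Ici (0:ℝ)))
    simpa using h
  · have h := (aux9 γ ω (-1) hγ hω (by norm_num)).mono (Set.subset_univ (Set.Ici (0:ℝ)))
    have : (fun t : ℝ => Real.exp (-(γ * t)) *
        (1 + (-1) * (γ / Real.sqrt (γ ^ 2 + ω ^ 2)) * Real.sin (ω * t))) =
        (fun t : ℝ => Real.exp (-(γ * t)) *
        (1 - γ / Real.sqrt (γ ^ 2 + ω ^ 2) * Real.sin (ω * t))) := by
      funext t; ring
    rwa [this] at h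
end
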